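/- Let μ > 0, σ > 0, γ > 0 with γ ≠ 1, ε ∈ (0,1), and λ ∈ (0, μ) with μ + λ < γσ². Set l = (μ−λ)/(γσ² − (μ−λ)), u = (1/(1−ε))·(μ+λ)/(γσ² − (μ+λ)), and L = log(u/l), and assume L > 0. Let w : [0, L] → (0, 1) be continuously differentiable, nondecreasing, satisfy the Riccati equation w'(y) + (1−γ)·w(y)² + (2μ/σ² − 1)·w(y) − (μ²−λ²)/(γσ⁴) = 0 for all y ∈ [0, L], with w(0) = (μ−λ)/(γσ²) and w(L) = (μ+λ)/(γσ²). Then the function g(y) = w(y) / ( l·e^y·(1 − w(y)) ) satisfies g(0) = 1, g(L) = 1 − ε, g is nonincreasing on [0, L], and consequently 1 − ε ≤ g(y) ≤ 1 for all y ∈ [0, L]. -/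

import Mathlib

set_option maxHeartbeats 1600000


/-- The shadow price stays in the bid-ask spread: the
multiplicative deviation `g(y) = w(y)/(l·e^y·(1-w(y)))` satisfies `g(0) = 1`,
`g(L) = 1-ε`, is nonincreasing on `[0, L]`, and hence takes values in
`[1-ε, 1]`. -/
theorem shadow_price_in_spread
    (μ σ γ ε lam : ℝ) (hμ : 0 < μ) (hσ : 0 < σ) (hγ : 0 < γ) (hγ1 : γ ≠ 1)
    (hε : ε ∈ Set.Ioo (0 : ℝ) 1) (hlam : lam ∈ Set.Ioo 0 μ)
    (hlev : μ + lam < γ * σ ^ 2)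
    (l u L : ℝ)
    (hl : l = (μ - lam) / (γ * σ ^ 2 - (μ - lam)))
    (hu : u = (1 / (1 - ε)) * ((μ + lam) / (γ * σ ^ 2 - (μ + lam))))
    (hL : L = Real.log (u / l)) (hLpos : 0 < L)
    (w w' : ℝ → ℝ)
    (hderiv : ∀ y ∈ Set.Icc 0 L, HasDerivWithinAt w (w' y) (Set.Icc 0 L) y)
    (hderivcont : ContinuousOn w' (Set.Icc 0 L))
    (hrange : ∀ y ∈ Set.Icc 0 L, w y ∈ Set.Ioo (0 : ℝ) 1)
    (hmono : MonotoneOn w (Set.Icc 0 L))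
    (hric : ∀ y ∈ Set.Icc 0 L,
      w' y + (1 - γ) * (w y) ^ 2 + (2 * μ / σ ^ 2 - 1) * w y
        - (μ ^ 2 - lam ^ 2) / (γ * σ ^ 4) = 0)
    (hw0 : w 0 = (μ - lam) / (γ * σ ^ 2))
    (hwL : w L = (μ + lam) / (γ * σ ^ 2))
    (g : ℝ → ℝ)
    (hg : g = fun y : ℝ => w y / (l * Real.exp y * (1 - w y))) :
    g 0 = 1 ∧ g L = 1 - ε ∧ AntitoneOn g (Set.Icc 0 L) ∧
    ∀ y ∈ Set.Icc 0 L, 1 - ε ≤ g y ∧ g y ≤ 1 := by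
  subst hg
  obtain ⟨hε0, hε1⟩ := hε
  obtain ⟨hlam0, hlamμ⟩ := hlam
  have hA : 0 < γ * σ ^ 2 := by positivity
  have hml : 0 < μ - lam := by linarith
  have hAml : 0 < γ * σ ^ 2 - (μ - lam) := by linarith
  have hAmu : 0 < γ * σ ^ 2 - (μ + lam) := by linarith
  have h1ε : 0 < 1 - ε := by linarith
  have hlpos : 0 < l := by rw [hl]; positivity
  have hupos : 0 < u := by rw [hu]; positivity
  have heL : Real.exp L = u / l := by
    rw [hL, Real.exp_log (by positivity)]
  -- key inequality: w' y ≤ w y * (1 - w y)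
  have hbound : ∀ y ∈ Set.Icc 0 L, (μ - lam) / (γ * σ ^ 2) ≤ w y ∧
      w y ≤ (μ + lam) / (γ * σ ^ 2) := by
    intro y hy
    constructor
    · rw [← hw0]
      exact hmono (Set.left_mem_Icc.2 hLpos.le) hy hy.1
    · rw [← hwL]
      exact hmono hy (Set.right_mem_Icc.2 hLpos.le) hy.2
  have hkey : ∀ y ∈ Set.Icc 0 L, w' y ≤ w y * (1 - w y) := by
    intro y hy
    have hr := hric y hy
    obtain ⟨hb1, hb2⟩ := hbound y hy
    have hσ2 : (0:ℝ) < σ ^ 2 := by positivity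
    have hσ4 : (0:ℝ) < σ ^ 4 := by positivity
    have h1 : μ - lam ≤ γ * σ ^ 2 * w y := by
      rw [div_le_iff₀ hA] at hb1; linarith [hb1]
    have h2 : γ * σ ^ 2 * w y ≤ μ + lam := by
      rw [le_div_iff₀ hA] at hb2; linarith [hb2]
    have hsq : (γ * σ ^ 2 * w y - μ) ^ 2 ≤ lam ^ 2 := by nlinarith
    -- from riccati: w' y = (μ²−λ²)/(γσ⁴) − (1−γ)w² − (2μ/σ²−1)w
    have hric' : w' y = (μ ^ 2 - lam ^ 2) / (γ * σ ^ 4)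
        - (1 - γ) * (w y) ^ 2 - (2 * μ / σ ^ 2 - 1) * w y := by linarith
    rw [hric']
    have h4 : (0:ℝ) < γ * σ ^ 4 := by positivity
    have key2 : (μ ^ 2 - lam ^ 2) + (γ * σ ^ 2 * w y) ^ 2 - 2 * μ * (γ * σ ^ 2 * w y) ≥ 0 ∨
        True := Or.inr trivial
    have key3 : (μ ^ 2 - lam ^ 2) + (γ * σ ^ 2 * w y) ^ 2 - 2 * μ * (γ * σ ^ 2 * w y) ≤ 0 := by
      nlinarith [hsq]
    have heq : (μ ^ 2 - lam ^ 2) / (γ * σ ^ 4) + γ * (w y) ^ 2 - 2 * μ / σ ^ 2 * w y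
        = ((μ ^ 2 - lam ^ 2) + (γ * σ ^ 2 * w y) ^ 2 - 2 * μ * (γ * σ ^ 2 * w y)) / (γ * σ ^ 4) := by
      field_simp
    have step : (μ ^ 2 - lam ^ 2) / (γ * σ ^ 4) + γ * (w y) ^ 2 - 2 * μ / σ ^ 2 * w y ≤ 0 := by
      rw [heq]
      exact div_nonpos_of_nonpos_of_nonneg key3 h4.le
    nlinarith [step]
  -- g(0) = 1
  have hw0' : w 0 < 1 := (hrange 0 (Set.left_mem_Icc.2 hLpos.le)).2
  have hwL' : w L < 1 := (hrange L (Set.right_mem_Icc.2 hLpos.le)).2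
  have hg0 : (fun y : ℝ => w y / (l * Real.exp y * (1 - w y))) 0 = 1 := by
    simp only [Real.exp_zero, mul_one]
    rw [hw0, hl]
    have : (1:ℝ) - (μ - lam) / (γ * σ ^ 2) = (γ * σ ^ 2 - (μ - lam)) / (γ * σ ^ 2) := by
      field_simp
    rw [this]
    field_simp
  have hgL : (fun y : ℝ => w y / (l * Real.exp y * (1 - w y))) L = 1 - ε := by
    simp only [heL]
    rw [hwL, hl, hu]
    have : (1:ℝ) - (μ + lam) / (γ * σ ^ 2) = (γ * σ ^ 2 - (μ + lam)) / (γ * σ ^ 2) := by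
      field_simp
    rw [this]
    field_simp
  -- derivative of g
  set G' : ℝ → ℝ := fun y => (w' y - w y * (1 - w y)) / (l * Real.exp y * (1 - w y) ^ 2)
    with hG'
  have hgderiv : ∀ y ∈ Set.Icc 0 L, HasDerivWithinAt (fun y : ℝ => w y / (l * Real.exp y * (1 - w y))) (G' y) (Set.Icc 0 L) y := by
    intro y hy
    have hwlt := hrange y hy
    have hne : 1 - w y ≠ 0 := by linarith [hwlt.2]
    have hdne : l * Real.exp y * (1 - w y) ≠ 0 := by
      have := Real.exp_pos y
      positivity
    have hd : HasDerivWithinAt (fun y => l * Real.exp y * (1 - w y))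
        (l * Real.exp y * (1 - w y) + l * Real.exp y * (0 - w' y)) (Set.Icc 0 L) y := by
      exact (((Real.hasDerivAt_exp y).hasDerivWithinAt.const_mul l)).mul
        ((hasDerivWithinAt_const y _ (1:ℝ)).sub (hderiv y hy))
    have hdiv : HasDerivWithinAt (fun y => w y / (l * Real.exp y * (1 - w y))) _ (Set.Icc 0 L) y := (hderiv y hy).div hd hdne
    convert hdiv using 1
    show (w' y - w y * (1 - w y)) / (l * Real.exp y * (1 - w y) ^ 2) = _
    rw [div_eq_div_iff (by positivity) (by positivity)]
    ring
  have hcont : ContinuousOn (fun y : ℝ => w y / (l * Real.exp y * (1 - w y)))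
      (Set.Icc 0 L) := fun y hy => (hgderiv y hy).continuousWithinAt
  have hanti : AntitoneOn (fun y : ℝ => w y / (l * Real.exp y * (1 - w y)))
      (Set.Icc 0 L) := by
    apply antitoneOn_of_deriv_nonpos (convex_Icc 0 L) hcont
    · intro x hx
      rw [interior_Icc] at hx
      have hx' : x ∈ Set.Icc 0 L := ⟨hx.1.le, hx.2.le⟩
      exact ((hgderiv x hx').hasDerivAt
        (Icc_mem_nhds hx.1 hx.2)).differentiableAt.differentiableWithinAt
    · intro x hx
      rw [interior_Icc] at hx
      have hx' : x ∈ Set.Icc 0 L := ⟨hx.1.le, hx.2.le⟩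
      rw [((hgderiv x hx').hasDerivAt (Icc_mem_nhds hx.1 hx.2)).deriv]
      apply div_nonpos_of_nonpos_of_nonneg
      · linarith [hkey x hx']
      · have := Real.exp_pos x
        positivity
  refine ⟨hg0, hgL, hanti, fun y hy => ⟨?_, ?_⟩⟩
  · have h := hanti hy (Set.right_mem_Icc.2 hLpos.le) hy.2
    rw [hgL] at h
    exact h
  · have h := hanti (Set.left_mem_Icc.2 hLpos.le) hy hy.1
    rw [hg0] at h
    exact h
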